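/- Let (W,S) be a Coxeter system, J ⊆ S, and w ∈ W. If v is a Bruhat-minimal element of {u ∈ W : u ≰ w_max}, where w_max is the maximum-length representative of the coset wW_J, then v lies in W^J, i.e., Des(v) ∩ J = ∅. -/

import Mathlib

/-- The Bruhat order on a Coxeter group, via the subword property. -/
def BruhatLE {B W : Type*} [Group W] {M : CoxeterMatrix B} (cs : CoxeterSystem M W)
    (u w : W) : Prop :=
  ∃ l : List B, cs.IsReduced l ∧ cs.wordProd l = w ∧
    ∃ l' : List B, l'.Sublist l ∧ cs.wordProd l' = u


set_option linter.unusedSectionVars false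

namespace BruhatAux

open CoxeterSystem List

variable {B W : Type*} [Group W] {M : CoxeterMatrix B} (cs : CoxeterSystem M W)

local prefix:100 "σ" => cs.simple
local prefix:100 "π" => cs.wordProd
local prefix:100 "ℓ" => cs.length

open Classical in
/-- Indicator function with values in `ZMod 2`. -/
noncomputable def ind (x y : W) : ZMod 2 := if x = y then 1 else 0

theorem ind_congr {x y x' y' : W} (h : (x = y) ↔ (x' = y')) : ind x y = ind x' y' := by
  unfold ind
  by_cases hxy : x = y
  · rw [if_pos hxy, if_pos (h.mp hxy)]
  · rw [if_neg hxy, if_neg (fun h' => hxy (h.mpr h'))]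

theorem ind_self (x : W) : ind x x = 1 := by simp [ind]

theorem ind_eq_zero_of_ne {x y : W} (h : x ≠ y) : ind x y = 0 := by simp [ind, h]

theorem ind_conj (a x y : W) : ind (a * x * a⁻¹) y = ind x (a⁻¹ * y * a) := by
  apply ind_congr
  constructor
  · rintro rfl; group
  · rintro rfl; group

theorem ind_simple_conj (i : B) (x y : W) :
    ind (σ i * x * σ i) y = ind x (σ i * y * σ i) := by
  apply ind_congr
  constructor
  · rintro rfl
    simp [mul_assoc, cs.simple_mul_simple_cancel_left, cs.simple_mul_simple_self]
  · rintro rfl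
    simp [mul_assoc, cs.simple_mul_simple_cancel_left, cs.simple_mul_simple_self]

/-- Sum of indicators over a list. -/
noncomputable def indSum (x : W) (l : List W) : ZMod 2 := (l.map (ind x)).sum

@[simp] theorem indSum_nil (x : W) : indSum x ([] : List W) = 0 := rfl

@[simp] theorem indSum_cons (x a : W) (l : List W) :
    indSum x (a :: l) = ind x a + indSum x l := by simp [indSum]

theorem indSum_eq_zero_of_not_mem {x : W} {l : List W} (h : x ∉ l) : indSum x l = 0 := by
  induction l with
  | nil => rfl
  | cons a l ih =>
    have hxa : x ≠ a := fun he => h (he ▸ mem_cons_self (a := a) (l := l))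
    rw [indSum_cons, ih (fun hm => h (mem_cons_of_mem a hm)), ind_eq_zero_of_ne hxa, add_zero]

/-- The sign permutation associated to a simple reflection. -/
noncomputable def sgnPerm (i : B) : Equiv.Perm (W × ZMod 2) where
  toFun p := (σ i * p.1 * σ i, p.2 + ind p.1 (σ i))
  invFun p := (σ i * p.1 * σ i, p.2 + ind p.1 (σ i))
  left_inv p := by
    ext
    · show σ i * (σ i * p.1 * σ i) * σ i = p.1
      simp [mul_assoc, cs.simple_mul_simple_cancel_left, cs.simple_mul_simple_self]
    · show p.2 + ind p.1 (σ i) + ind (σ i * p.1 * σ i) (σ i) = p.2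
      rw [ind_simple_conj, cs.simple_mul_simple_self, one_mul,
        add_assoc, CharTwo.add_self_eq_zero, add_zero]
  right_inv p := by
    ext
    · show σ i * (σ i * p.1 * σ i) * σ i = p.1
      simp [mul_assoc, cs.simple_mul_simple_cancel_left, cs.simple_mul_simple_self]
    · show p.2 + ind p.1 (σ i) + ind (σ i * p.1 * σ i) (σ i) = p.2
      rw [ind_simple_conj, cs.simple_mul_simple_self, one_mul,
        add_assoc, CharTwo.add_self_eq_zero, add_zero]

theorem sgnPerm_apply (i : B) (x : W) (ε : ZMod 2) :
    sgnPerm cs i (x, ε) = (σ i * x * σ i, ε + ind x (σ i)) := rfl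

private theorem grp_conj_pow (p x : W) (k : ℕ) :
    p ^ k * (p * x * p⁻¹) * (p ^ k)⁻¹ = p ^ (k+1) * x * (p ^ (k+1))⁻¹ := by
  rw [pow_succ']
  group

private theorem grp_shift (p t : W) (r : ℕ) (h : t * p = p⁻¹ * t) :
    p⁻¹ * ((p ^ r)⁻¹ * t) * p = (p ^ (r+2))⁻¹ * t := by
  calc p⁻¹ * ((p ^ r)⁻¹ * t) * p = p⁻¹ * (p ^ r)⁻¹ * (t * p) := by group
    _ = p⁻¹ * (p ^ r)⁻¹ * (p⁻¹ * t) := by rw [h]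
    _ = (p ^ (r+2))⁻¹ * t := by rw [pow_add, pow_two]; group

theorem sj_mul_p (i j : B) : σ j * (σ i * σ j) = (σ i * σ j)⁻¹ * σ j := by
  rw [mul_inv_rev, cs.inv_simple, cs.inv_simple, ← mul_assoc, mul_assoc (σ j) (σ i) (σ j)]

theorem sgnPerm_mul_apply (i j : B) (x : W) (ε : ZMod 2) :
    (sgnPerm cs i * sgnPerm cs j) (x, ε) =
      ((σ i * σ j) * x * (σ i * σ j)⁻¹,
        ε + ind x (((σ i * σ j) ^ 0)⁻¹ * σ j) + ind x (((σ i * σ j) ^ 1)⁻¹ * σ j)) := by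
  rw [Equiv.Perm.mul_apply, sgnPerm_apply, sgnPerm_apply]
  ext
  · show σ i * (σ j * x * σ j) * σ i = (σ i * σ j) * x * (σ i * σ j)⁻¹
    rw [mul_inv_rev, cs.inv_simple, cs.inv_simple]
    group
  · show ε + ind x (σ j) + ind (σ j * x * σ j) (σ i)
        = ε + ind x (((σ i * σ j) ^ 0)⁻¹ * σ j) + ind x (((σ i * σ j) ^ 1)⁻¹ * σ j)
    have hA : ind x (((σ i * σ j) ^ 0)⁻¹ * σ j) = ind x (σ j) := by
      apply ind_congr
      rw [pow_zero, inv_one, one_mul]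
    have hB : ind (σ j * x * σ j) (σ i) = ind x (((σ i * σ j) ^ 1)⁻¹ * σ j) := by
      rw [ind_simple_conj]
      apply ind_congr
      rw [pow_one, mul_inv_rev, cs.inv_simple, cs.inv_simple, mul_assoc]
    rw [hA, hB]

theorem sgnPerm_mul_pow_apply (i j : B) (k : ℕ) (x : W) (ε : ZMod 2) :
    ((sgnPerm cs i * sgnPerm cs j) ^ k) (x, ε) =
      ((σ i * σ j) ^ k * x * ((σ i * σ j) ^ k)⁻¹,
        ε + ∑ r ∈ Finset.range (2 * k), ind x (((σ i * σ j) ^ r)⁻¹ * σ j)) := by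
  induction k generalizing x ε with
  | zero => simp
  | succ k ih =>
    rw [pow_succ, Equiv.Perm.mul_apply, sgnPerm_mul_apply, ih]
    have hshift : ∀ r : ℕ, ind ((σ i * σ j) * x * (σ i * σ j)⁻¹) (((σ i * σ j) ^ r)⁻¹ * σ j)
        = ind x (((σ i * σ j) ^ (r + 2))⁻¹ * σ j) := by
      intro r
      rw [ind_conj]
      apply ind_congr
      rw [grp_shift (σ i * σ j) (σ j) r (sj_mul_p cs i j)]
    ext
    · show (σ i * σ j) ^ k * ((σ i * σ j) * x * (σ i * σ j)⁻¹) * ((σ i * σ j) ^ k)⁻¹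
        = (σ i * σ j) ^ (k+1) * x * ((σ i * σ j) ^ (k+1))⁻¹
      exact grp_conj_pow (σ i * σ j) x k
    · show ε + ind x (((σ i * σ j) ^ 0)⁻¹ * σ j) + ind x (((σ i * σ j) ^ 1)⁻¹ * σ j)
          + ∑ r ∈ Finset.range (2 * k), ind ((σ i * σ j) * x * (σ i * σ j)⁻¹)
              (((σ i * σ j) ^ r)⁻¹ * σ j)
        = ε + ∑ r ∈ Finset.range (2 * (k+1)), ind x (((σ i * σ j) ^ r)⁻¹ * σ j)
      have hsum : ∑ r ∈ Finset.range (2 * k), ind ((σ i * σ j) * x * (σ i * σ j)⁻¹)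
            (((σ i * σ j) ^ r)⁻¹ * σ j)
          = ∑ r ∈ Finset.range (2 * k), ind x (((σ i * σ j) ^ (r + 2))⁻¹ * σ j) :=
        Finset.sum_congr rfl (fun r _ => hshift r)
      rw [hsum]
      have h2k2 : 2 * (k + 1) = (2 * k + 1) + 1 := by ring
      rw [h2k2, Finset.sum_range_succ', Finset.sum_range_succ']
      have hidx : ∀ r : ℕ, ind x (((σ i * σ j) ^ (r + 1 + 1))⁻¹ * σ j)
          = ind x (((σ i * σ j) ^ (r + 2))⁻¹ * σ j) := fun r => rfl
      simp only [hidx]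
      ring

theorem sgnPerm_liftable : M.IsLiftable (sgnPerm cs) := by
  intro i j
  rcases Nat.eq_zero_or_pos (M i j) with h0 | hpos
  · rw [h0, pow_zero]
  · apply Equiv.ext
    rintro ⟨x, ε⟩
    rw [sgnPerm_mul_pow_apply]
    have hone : (σ i * σ j) ^ M i j = 1 := cs.simple_mul_simple_pow i j
    have hsum : ∑ r ∈ Finset.range (2 * M i j), ind x (((σ i * σ j) ^ r)⁻¹ * σ j) = 0 := by
      have hsplit : ∑ r ∈ Finset.range (2 * M i j), ind x (((σ i * σ j) ^ r)⁻¹ * σ j)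
          = ∑ r ∈ Finset.range (M i j), ind x (((σ i * σ j) ^ r)⁻¹ * σ j)
            + ∑ r ∈ Finset.range (M i j), ind x (((σ i * σ j) ^ (M i j + r))⁻¹ * σ j) := by
        rw [two_mul]
        rw [Finset.range_eq_Ico, ← Finset.sum_Ico_consecutive _ (Nat.zero_le (M i j))
          (Nat.le_add_right (M i j) (M i j))]
        congr 1
        · rw [Finset.sum_Ico_eq_sum_range]; simp
        rw [Finset.sum_Ico_eq_sum_range]
        have hMM : M i j + M i j - M i j = M i j := by omega
        rw [hMM, Finset.range_eq_Ico]
      have hper : ∀ r : ℕ, ind x (((σ i * σ j) ^ (M i j + r))⁻¹ * σ j)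
          = ind x (((σ i * σ j) ^ r)⁻¹ * σ j) := by
        intro r
        rw [pow_add, hone, one_mul]
      rw [hsplit, Finset.sum_congr rfl (fun r _ => hper r), CharTwo.add_self_eq_zero]
    rw [hsum, hone, add_zero, inv_one, mul_one, one_mul]
    rfl

/-- The sign representation `W →* Perm (W × ZMod 2)`. -/
noncomputable def sgn : W →* Equiv.Perm (W × ZMod 2) :=
  cs.lift ⟨sgnPerm cs, sgnPerm_liftable cs⟩

theorem sgn_simple (i : B) : sgn cs (σ i) = sgnPerm cs i :=
  cs.lift_apply_simple (sgnPerm_liftable cs) i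

theorem sgn_wordProd (ω : List B) (x : W) (ε : ZMod 2) :
    sgn cs (π ω) (x, ε) = (π ω * x * (π ω)⁻¹, ε + indSum x (cs.rightInvSeq ω)) := by
  induction ω generalizing ε with
  | nil => simp [wordProd_nil]
  | cons i ω ih =>
    rw [wordProd_cons, map_mul, Equiv.Perm.mul_apply, ih, sgn_simple, sgnPerm_apply]
    have hris : cs.rightInvSeq (i :: ω) = (π ω)⁻¹ * σ i * π ω :: cs.rightInvSeq ω := rfl
    rw [hris, indSum_cons]
    ext
    · show σ i * (π ω * x * (π ω)⁻¹) * σ i = (σ i * π ω) * x * (σ i * π ω)⁻¹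
      rw [mul_inv_rev, cs.inv_simple]
      group
    · show ε + indSum x (cs.rightInvSeq ω) + ind (π ω * x * (π ω)⁻¹) (σ i)
        = ε + (ind x ((π ω)⁻¹ * σ i * π ω) + indSum x (cs.rightInvSeq ω))
      rw [ind_conj]
      ring

/-- The reflection cocycle with values in `ZMod 2`. -/
noncomputable def nn (w x : W) : ZMod 2 := (sgn cs w (x, 0)).2

theorem nn_wordProd (ω : List B) (x : W) : nn cs (π ω) x = indSum x (cs.rightInvSeq ω) := by
  unfold nn
  rw [sgn_wordProd, zero_add]

theorem sgn_apply (w x : W) (ε : ZMod 2) :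
    sgn cs w (x, ε) = (w * x * w⁻¹, ε + nn cs w x) := by
  obtain ⟨ω, -, rfl⟩ := cs.exists_reduced_word' w
  rw [sgn_wordProd, nn_wordProd]

theorem nn_mul (u v x : W) : nn cs (u * v) x = nn cs v x + nn cs u (v * x * v⁻¹) := by
  have h : sgn cs (u * v) (x, 0) = sgn cs u (sgn cs v (x, 0)) := by
    rw [map_mul, Equiv.Perm.mul_apply]
  rw [sgn_apply, sgn_apply, sgn_apply] at h
  have := congrArg Prod.snd h
  simpa using this

theorem nn_simple (i : B) (x : W) : nn cs (σ i) x = ind x (σ i) := by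
  have h : σ i = π [i] := by rw [wordProd_singleton]
  rw [h, nn_wordProd]
  have hris : cs.rightInvSeq [i] = [(π ([] : List B))⁻¹ * σ i * π ([] : List B)] := rfl
  rw [hris, indSum_cons, indSum_nil, add_zero]
  apply ind_congr
  rw [wordProd_nil, inv_one, one_mul, mul_one, wordProd_singleton]

theorem nn_one (x : W) : nn cs 1 x = 0 := by
  unfold nn
  rw [map_one]
  rfl

theorem zmod2_eq_of_add_eq_zero {a b : ZMod 2} (h : a + b = 0) : a = b := by
  have : a + (b + b) = (a + b) + b := by ring
  rw [CharTwo.add_self_eq_zero, add_zero, h, zero_add] at this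
  exact this

theorem nn_inv (z x : W) : nn cs z⁻¹ x = nn cs z (z⁻¹ * x * z) := by
  apply zmod2_eq_of_add_eq_zero
  have h := nn_mul cs z z⁻¹ x
  rw [mul_inv_cancel, nn_one, inv_inv] at h
  exact h.symm

theorem nn_refl_self {t : W} (ht : cs.IsReflection t) : nn cs t t = 1 := by
  obtain ⟨z, a, rfl⟩ := ht
  have key : nn cs (z * (σ a * z⁻¹)) (z * σ a * z⁻¹)
      = nn cs (σ a * z⁻¹) (z * σ a * z⁻¹) + nn cs z (σ a) := by
    rw [nn_mul]
    congr 2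
    calc σ a * z⁻¹ * (z * σ a * z⁻¹) * (σ a * z⁻¹)⁻¹
        = σ a * (z⁻¹ * z) * σ a * (z⁻¹ * z) * (σ a)⁻¹ := by group
      _ = σ a := by rw [inv_mul_cancel, mul_one, mul_one, cs.inv_simple,
            mul_assoc, cs.simple_mul_simple_self, mul_one]
  have key2 : nn cs (σ a * z⁻¹) (z * σ a * z⁻¹)
      = nn cs z⁻¹ (z * σ a * z⁻¹) + 1 := by
    rw [nn_mul]
    congr 1
    have harg : z⁻¹ * (z * σ a * z⁻¹) * z⁻¹⁻¹ = σ a := by group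
    rw [harg, nn_simple, ind_self]
  have key3 : nn cs z⁻¹ (z * σ a * z⁻¹) = nn cs z (σ a) := by
    rw [nn_inv]
    congr 1
    group
  have hz : z * (σ a * z⁻¹) = z * σ a * z⁻¹ := by rw [mul_assoc]
  rw [hz] at key
  rw [key2, key3] at key
  rw [key]
  have hch : ∀ a : ZMod 2, a + 1 + a = 1 := by
    intro a
    have h' : a + 1 + a = (a + a) + 1 := by ring
    rw [h', CharTwo.add_self_eq_zero, zero_add]
  exact hch _

theorem nn_eq_zero_of_gt {w t : W} (ht : cs.IsReflection t) (h : ℓ w < ℓ (w * t)) :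
    nn cs w t = 0 := by
  obtain ⟨ω, hred, hw⟩ := cs.exists_reduced_word' w
  rw [hw, nn_wordProd]
  apply indSum_eq_zero_of_not_mem
  intro hmem
  have := (cs.isRightInversion_of_mem_rightInvSeq hred hmem).2
  rw [← hw] at this
  omega

theorem nn_eq_one_of_lt {w t : W} (ht : cs.IsReflection t) (h : ℓ (w * t) < ℓ w) :
    nn cs w t = 1 := by
  have hw : w = (w * t) * t := by
    rw [mul_assoc, ht.mul_self, mul_one]
  have hmul : nn cs ((w * t) * t) t = nn cs t t + nn cs (w * t) (t * t * t⁻¹) := nn_mul cs _ _ _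
  rw [ht.mul_self, one_mul, ht.inv] at hmul
  have hz : nn cs (w * t) t = 0 := by
    apply nn_eq_zero_of_gt cs ht
    rw [mul_assoc, ht.mul_self, mul_one]
    exact h
  rw [← hw, nn_refl_self cs ht, hz, add_zero] at hmul
  exact hmul

theorem mem_rightInvSeq_of_isRightInversion {ω : List B} (hred : cs.IsReduced ω) {t : W}
    (ht : cs.IsReflection t) (h : ℓ (π ω * t) < ℓ (π ω)) : t ∈ cs.rightInvSeq ω := by
  by_contra hmem
  have h0 : nn cs (π ω) t = 0 := by
    rw [nn_wordProd]
    exact indSum_eq_zero_of_not_mem hmem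
  have h1 : nn cs (π ω) t = 1 := nn_eq_one_of_lt cs ht h
  rw [h0] at h1
  exact one_ne_zero h1.symm

/-- Strong exchange property. -/
theorem strong_exchange {ω : List B} (hred : cs.IsReduced ω) {t : W}
    (ht : cs.IsReflection t) (h : ℓ (π ω * t) < ℓ (π ω)) :
    ∃ j < ω.length, π (ω.eraseIdx j) = π ω * t := by
  have hmem := mem_rightInvSeq_of_isRightInversion cs hred ht h
  obtain ⟨j, hj, hjt⟩ := List.mem_iff_getElem.mp hmem
  rw [cs.length_rightInvSeq] at hj
  refine ⟨j, hj, ?_⟩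
  rw [← cs.wordProd_mul_getD_rightInvSeq ω j]
  congr 1
  rw [List.getD_eq_getElem _ _ (by rwa [cs.length_rightInvSeq])]
  exact hjt

/-- Deletion property: every word has a reduced sublist with the same product. -/
theorem exists_reduced_sublist : ∀ (n : ℕ) (ω : List B), ω.length ≤ n →
    ∃ ω', ω'.Sublist ω ∧ cs.IsReduced ω' ∧ π ω' = π ω := by
  intro n
  induction n with
  | zero =>
    intro ω h
    have : ω = [] := List.eq_nil_of_length_eq_zero (by omega)
    subst this
    refine ⟨[], List.Sublist.refl _, ?_, rfl⟩
    unfold CoxeterSystem.IsReduced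
    rw [wordProd_nil, cs.length_one]
    rfl
  | succ n ihn =>
    intro ω hlen
    by_cases hred : cs.IsReduced ω
    · exact ⟨ω, List.Sublist.refl ω, hred, rfl⟩
    · classical
      have hex : ∃ k, ¬ cs.IsReduced (ω.take k) := ⟨ω.length, by rwa [List.take_length]⟩
      have hKspec : ¬ cs.IsReduced (ω.take (Nat.find hex)) := Nat.find_spec hex
      have hK0 : Nat.find hex ≠ 0 := by
        intro h0
        apply hKspec
        rw [h0, List.take_zero]
        unfold CoxeterSystem.IsReduced
        rw [wordProd_nil, cs.length_one]
        rfl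
      obtain ⟨k, hk⟩ : ∃ k, Nat.find hex = k + 1 := ⟨Nat.find hex - 1, by omega⟩
      have hKle : Nat.find hex ≤ ω.length := by
        by_contra hgt
        push_neg at hgt
        have := Nat.find_min hex hgt
        rw [List.take_length] at this
        exact this hred
      have hklt : k < ω.length := by omega
      have hredk : cs.IsReduced (ω.take k) := by
        have := Nat.find_min hex (show k < Nat.find hex by omega)
        exact not_not.mp this
      have hredk1 : ¬ cs.IsReduced (ω.take (k+1)) := by rw [← hk]; exact hKspec
      have htake : ω.take (k+1) = ω.take k ++ [ω[k]] := by
        rw [List.take_succ, List.getElem?_eq_getElem hklt]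
        rfl
      have hlenk : (ω.take k).length = k := by rw [List.length_take]; omega
      have hlk : ℓ (π (ω.take k)) = k := by rw [hredk, hlenk]
      have hprod1 : π (ω.take (k+1)) = π (ω.take k) * σ (ω[k]) := by
        rw [htake, wordProd_append, wordProd_singleton]
      have hdesc : ℓ (π (ω.take k) * σ (ω[k])) < ℓ (π (ω.take k)) := by
        rcases cs.length_mul_simple (π (ω.take k)) (ω[k]) with h | h
        · exfalso
          apply hredk1
          unfold CoxeterSystem.IsReduced
          rw [hprod1, h, hlk, List.length_take]
          omega
        · omega
      have hk1 : 1 ≤ k := by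
        by_contra hk0
        push_neg at hk0
        interval_cases k
        rw [List.take_zero, wordProd_nil] at hdesc
        rw [cs.length_one] at hdesc
        omega
      obtain ⟨j, hj, hjprod⟩ := strong_exchange cs hredk (cs.isReflection_simple (ω[k])) hdesc
      have hjlt : j < (ω.take k).length := by omega
      have hprod'' : π ((ω.take k).eraseIdx j ++ ω.drop (k+1)) = π ω := by
        rw [wordProd_append, hjprod, ← hprod1, ← wordProd_append, List.take_append_drop]
      have hsub'' : ((ω.take k).eraseIdx j ++ ω.drop (k+1)).Sublist ω := by
        have h1 : ((ω.take k).eraseIdx j).Sublist (ω.take (k+1)) := by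
          refine (List.eraseIdx_sublist _ j).trans ?_
          rw [htake]
          exact List.sublist_append_left _ _
        have h2 := List.Sublist.append h1 (List.Sublist.refl (ω.drop (k+1)))
        rwa [List.take_append_drop] at h2
      have hlen'' : ((ω.take k).eraseIdx j ++ ω.drop (k+1)).length ≤ n := by
        rw [List.length_append]
        have he := List.length_eraseIdx_add_one hjlt
        rw [List.length_drop]
        omega
      obtain ⟨τ, hτsub, hτred, hτprod⟩ := ihn _ hlen''
      exact ⟨τ, hτsub.trans hsub'', hτred, by rw [hτprod, hprod'']⟩

/-- A single step of a (downward) reflection chain. -/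
def cstep (a b : W) : Prop := ∃ t, cs.IsReflection t ∧ b = a * t ∧ ℓ b < ℓ a

/-- The chain order: `u ≤ w` via a downward chain of reflection multiplications. -/
def cle (u w : W) : Prop := Relation.ReflTransGen (cstep cs) w u

theorem cle_subword {u w : W} (h : cle cs u w) :
    ∀ ω : List B, cs.IsReduced ω → π ω = w →
      ∃ ω', ω'.Sublist ω ∧ cs.IsReduced ω' ∧ π ω' = u := by
  unfold cle at h
  induction h with
  | refl =>
    intro ω hred hprod
    exact ⟨ω, List.Sublist.refl ω, hred, hprod⟩
  | tail hwb hstep ih =>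
    intro ω hred hprod
    obtain ⟨σl, hσsub, hσred, hσprod⟩ := ih ω hred hprod
    obtain ⟨t, ht, rfl, hlt⟩ := hstep
    have hdesc : ℓ (π σl * t) < ℓ (π σl) := by rw [hσprod]; exact hlt
    obtain ⟨j, hj, hjprod⟩ := strong_exchange cs hσred ht hdesc
    obtain ⟨τ, hτsub, hτred, hτprod⟩ :=
      exists_reduced_sublist cs (σl.eraseIdx j).length (σl.eraseIdx j) le_rfl
    exact ⟨τ, (hτsub.trans (List.eraseIdx_sublist σl j)).trans hσsub, hτred,
      by rw [hτprod, hjprod, hσprod]⟩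

theorem ZA (n : ℕ) :
    (∀ w u : W, ℓ w ≤ n → ∀ i : B, ℓ (w * σ i) < ℓ w → cle cs u w → cle cs (u * σ i) w) ∧
    (∀ ω ω' : List B, cs.IsReduced ω → ω.length ≤ n → ω'.Sublist ω → cle cs (π ω') (π ω)) := by
  induction n using Nat.strong_induction_on with
  | _ n ih =>
  have Zn : ∀ w u : W, ℓ w ≤ n → ∀ i : B, ℓ (w * σ i) < ℓ w → cle cs u w →
      cle cs (u * σ i) w := by
    intro w u hwn i hdes hu
    by_cases hud : ℓ (u * σ i) < ℓ u
    · exact hu.tail ⟨σ i, cs.isReflection_simple i, rfl, hud⟩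
    · have hud' : ℓ u < ℓ (u * σ i) :=
        lt_of_le_of_ne (not_lt.mp hud) (Ne.symm (cs.length_mul_simple_ne u i))
      have hw1 : 1 ≤ ℓ w := by omega
      have hn1 : 1 ≤ n := by omega
      have hlws : ℓ (w * σ i) + 1 = ℓ w := by
        rcases cs.length_mul_simple w i with h | h
        · omega
        · exact h
      obtain ⟨σ₀, hσ₀red, hσ₀⟩ := cs.exists_reduced_word' (w * σ i)
      have hσ₀len : σ₀.length = ℓ (w * σ i) := by rw [hσ₀red.symm, ← hσ₀]
      have hωprod : π (σ₀ ++ [i]) = w := by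
        rw [wordProd_append, wordProd_singleton, ← hσ₀, cs.simple_mul_simple_cancel_right]
      have hωred : cs.IsReduced (σ₀ ++ [i]) := by
        unfold CoxeterSystem.IsReduced
        rw [hωprod, List.length_append, List.length_singleton, hσ₀len]
        omega
      obtain ⟨ω', hsub, hω'red, hω'prod⟩ := cle_subword cs hu (σ₀ ++ [i]) hωred hωprod
      obtain ⟨l₁, l₂, heq, hl₁, hl₂⟩ := List.sublist_append_iff.mp hsub
      subst heq
      rcases l₂ with _ | ⟨a, l₂⟩
      · rw [List.append_nil] at hω'prod hω'red
        have hu' : cle cs u (w * σ i) := by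
          have h := (ih (n-1) (by omega)).2 σ₀ l₁ hσ₀red (by omega) hl₁
          rw [hω'prod, ← hσ₀] at h
          exact h
        rcases hu'.cases_head with heq2 | ⟨w₁, hstep, hchain⟩
        · rw [← heq2, cs.simple_mul_simple_cancel_right]
          exact Relation.ReflTransGen.refl
        · obtain ⟨t, htrefl, hw₁eq, hw₁len⟩ := hstep
          by_cases hc : ℓ (w₁ * σ i) < ℓ w₁
          · have husi : cle cs (u * σ i) w₁ :=
              (ih (n-1) (by omega)).1 w₁ u (by omega) i hc hchain
            have s1 : cstep cs w (w * σ i) := ⟨σ i, cs.isReflection_simple i, rfl, hdes⟩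
            have s2 : cstep cs (w * σ i) w₁ := ⟨t, htrefl, hw₁eq, hw₁len⟩
            exact ((Relation.ReflTransGen.refl.tail s1).tail s2).trans husi
          · have hc' : ℓ w₁ < ℓ (w₁ * σ i) :=
              lt_of_le_of_ne (not_lt.mp hc) (Ne.symm (cs.length_mul_simple_ne w₁ i))
            have hylen' : ℓ (w₁ * σ i) = ℓ w₁ + 1 := by
              rcases cs.length_mul_simple w₁ i with h | h
              · exact h
              · omega
            have hy : w₁ * σ i = w * (σ i * t * σ i) := by
              rw [hw₁eq]
              group
            have hyrefl : cs.IsReflection (σ i * t * σ i) := by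
              have h := htrefl.conj (σ i)
              rwa [cs.inv_simple] at h
            have sy : cstep cs w (w₁ * σ i) := ⟨σ i * t * σ i, hyrefl, hy, by omega⟩
            have sy2 : cstep cs (w₁ * σ i) w₁ :=
              ⟨σ i, cs.isReflection_simple i, (cs.simple_mul_simple_cancel_right i).symm, hc'⟩
            have hcleuy : cle cs u (w₁ * σ i) :=
              (Relation.ReflTransGen.refl.tail sy2).trans hchain
            have husi : cle cs (u * σ i) (w₁ * σ i) :=
              (ih (n-1) (by omega)).1 (w₁ * σ i) u (by omega) i
                (by rw [cs.simple_mul_simple_cancel_right]; exact hc') hcleuy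
            exact (Relation.ReflTransGen.refl.tail sy).trans husi
      · -- second component of the sublist is [i] (ends with the letter i)
        exfalso
        rcases List.sublist_singleton.mp hl₂ with hcontra | heq1
        · exact (List.cons_ne_nil a l₂) hcontra
        have ha : a = i := by injection heq1
        have hl₂nil : l₂ = [] := by injection heq1 with h1 h2
        subst hl₂nil
        subst ha
        have h1 : u * σ a = π l₁ := by
          rw [← hω'prod, wordProd_append, wordProd_singleton,
            cs.simple_mul_simple_cancel_right]
        have h2 : ℓ (u * σ a) ≤ l₁.length := h1 ▸ cs.length_wordProd_le l₁
        have h3 : ℓ u = l₁.length + 1 := by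
          have h := hω'red
          unfold CoxeterSystem.IsReduced at h
          rw [hω'prod] at h
          rw [h, List.length_append, List.length_singleton]
        omega
  refine ⟨Zn, ?_⟩
  intro ω ω' hred hn hsub
  rcases List.eq_nil_or_concat ω with rfl | ⟨ω₀, c, rfl⟩
  · rw [List.sublist_nil.mp hsub]
    exact Relation.ReflTransGen.refl
  · rw [List.concat_eq_append] at hsub hred hn ⊢
    have hω₀red : cs.IsReduced ω₀ := by
      have h := hred.take ω₀.length
      rwa [List.take_left] at h
    have hlenω : (ω₀ ++ [c]).length = ω₀.length + 1 := by simp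
    have hprod : π (ω₀ ++ [c]) = π ω₀ * σ c := by rw [wordProd_append, wordProd_singleton]
    have hlt : ℓ (π ω₀) < ℓ (π (ω₀ ++ [c])) := by
      rw [hω₀red, hred, hlenω]
      omega
    have hstep0 : cstep cs (π (ω₀ ++ [c])) (π ω₀) :=
      ⟨σ c, cs.isReflection_simple c, by rw [hprod, cs.simple_mul_simple_cancel_right], hlt⟩
    have hle0 : cle cs (π ω₀) (π (ω₀ ++ [c])) := Relation.ReflTransGen.refl.tail hstep0
    have hn1 : 1 ≤ n := by rw [hlenω] at hn; omega
    obtain ⟨l₁, l₂, heq, hl₁, hl₂⟩ := List.sublist_append_iff.mp hsub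
    subst heq
    have hcle1 : cle cs (π l₁) (π ω₀) :=
      (ih (n-1) (by omega)).2 ω₀ l₁ hω₀red (by rw [hlenω] at hn; omega) hl₁
    rcases l₂ with _ | ⟨a, l₂⟩
    · rw [List.append_nil]
      exact Relation.ReflTransGen.trans hle0 hcle1
    · rcases List.sublist_singleton.mp hl₂ with hcontra | heq1
      · exact absurd hcontra (List.cons_ne_nil a l₂)
      have ha : a = c := by injection heq1
      have hl₂nil : l₂ = [] := by injection heq1 with h1 h2
      subst hl₂nil
      subst ha
      have hu0 : cle cs (π l₁) (π (ω₀ ++ [a])) := Relation.ReflTransGen.trans hle0 hcle1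
      have hdes : ℓ (π (ω₀ ++ [a]) * σ a) < ℓ (π (ω₀ ++ [a])) := by
        have hlt' := hlt
        rw [hprod] at hlt'
        rw [hprod, cs.simple_mul_simple_cancel_right]
        exact hlt'
      have hZ := Zn (π (ω₀ ++ [a])) (π l₁) (by rw [hred, hlenω]; omega) a hdes hu0
      rw [wordProd_append, wordProd_singleton]
      exact hZ

theorem cle_of_bruhatLE {u w : W} (h : _root_.BruhatLE cs u w) : cle cs u w := by
  obtain ⟨l, hred, hw, l', hsub, hu⟩ := h
  subst hw
  subst hu
  exact (ZA cs l.length).2 l l' hred le_rfl hsub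

theorem bruhatLE_of_cle {u w : W} (h : cle cs u w) : _root_.BruhatLE cs u w := by
  obtain ⟨ω, hred, hw⟩ := cs.exists_reduced_word' w
  obtain ⟨ω', hsub, hred', hprod⟩ := cle_subword cs h ω hred hw.symm
  exact ⟨ω, hred, hw.symm, ω', hsub, hprod⟩

end BruhatAux

/-- If `v` is Bruhat-minimal among elements not below `w_max`, where `w_max` is the
maximal-length representative of the coset `w W_J`, then `v ∈ W^J`, i.e. `Des(v) ∩ J = ∅`. -/
theorem essential_set_of_wmax_in_WJ
    {B W : Type*} [Group W] [Finite W] {M : CoxeterMatrix B} (cs : CoxeterSystem M W)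
    (J : Set B) (w wmax v : W)
    (hmem : ∃ x ∈ Subgroup.closure (cs.simple '' J), wmax = w * x)
    (hmax : ∀ u : W, (∃ x ∈ Subgroup.closure (cs.simple '' J), u = w * x) →
      cs.length u ≤ cs.length wmax)
    (hv : ¬ BruhatLE cs v wmax)
    (hmin : ∀ v' : W, ¬ BruhatLE cs v' wmax → BruhatLE cs v' v → v' = v) :
    ∀ i ∈ J, ¬ cs.length (v * cs.simple i) < cs.length v := by
  intro i hi hdes
  obtain ⟨x, hx, rfl⟩ := hmem
  have hxs : x * cs.simple i ∈ Subgroup.closure (cs.simple '' J) :=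
    mul_mem hx (Subgroup.subset_closure ⟨i, hi, rfl⟩)
  have h1 : cs.length (w * x * cs.simple i) ≤ cs.length (w * x) :=
    hmax (w * x * cs.simple i) ⟨x * cs.simple i, hxs, mul_assoc w x (cs.simple i)⟩
  have hdw : cs.length (w * x * cs.simple i) < cs.length (w * x) :=
    lt_of_le_of_ne h1 (cs.length_mul_simple_ne (w * x) i)
  have hvsv : BruhatLE cs (v * cs.simple i) v := by
    obtain ⟨σ0, hσred, hσ⟩ := cs.exists_reduced_word' (v * cs.simple i)
    have hσlen : σ0.length = cs.length (v * cs.simple i) := by rw [hσred.symm, ← hσ]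
    have hprodv : cs.wordProd (σ0 ++ [i]) = v := by
      rw [cs.wordProd_append, cs.wordProd_singleton, ← hσ, cs.simple_mul_simple_cancel_right]
    refine ⟨σ0 ++ [i], ?_, hprodv, σ0, List.sublist_append_left _ _, hσ.symm⟩
    unfold CoxeterSystem.IsReduced
    rw [hprodv, List.length_append, List.length_singleton, hσlen]
    have := cs.length_mul_simple v i
    omega
  have hne : v * cs.simple i ≠ v := by
    intro h
    have h' := congrArg (fun z => v⁻¹ * z) h
    simp only [← mul_assoc, inv_mul_cancel, one_mul] at h'
    have hls := cs.length_simple i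
    rw [h', cs.length_one] at hls
    omega
  have hbs : BruhatLE cs (v * cs.simple i) (w * x) := by
    by_contra hc
    exact hne (hmin _ hc hvsv)
  have hcle : BruhatAux.cle cs (v * cs.simple i) (w * x) := BruhatAux.cle_of_bruhatLE cs hbs
  have hZ := (BruhatAux.ZA cs (cs.length (w * x))).1 (w * x) (v * cs.simple i) le_rfl i hdw hcle
  rw [cs.simple_mul_simple_cancel_right] at hZ
  exact hv (BruhatAux.bruhatLE_of_cle cs hZ)
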